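/- Let Γ be an n×n symmetric positive semidefinite real matrix, y ∈ ℝⁿ, and λ > 0. Define J(α) = (Γα − y)ᵀ(Γα − y) + λ·αᵀΓα for α ∈ ℝⁿ. Then α* = (Γ + λI)⁻¹ y is a minimizer of J, i.e. J(α*) ≤ J(α) for every α ∈ ℝⁿ. -/

import Mathlib

open Matrix

/-- `α* = (Γ + λI)⁻¹ y` minimizes
`J(α) = (Γα − y)ᵀ(Γα − y) + λ·αᵀΓα`. -/
theorem two_step_krr_stmt1 {n : ℕ}
    (Γ : Matrix (Fin n) (Fin n) ℝ) (hΓ : Γ.PosSemidef)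
    (y : Fin n → ℝ) (lam : ℝ) (hlam : 0 < lam) :
    ∀ α : Fin n → ℝ,
      (Γ *ᵥ ((Γ + lam • 1)⁻¹ *ᵥ y) - y) ⬝ᵥ (Γ *ᵥ ((Γ + lam • 1)⁻¹ *ᵥ y) - y)
        + lam * (((Γ + lam • 1)⁻¹ *ᵥ y) ⬝ᵥ (Γ *ᵥ ((Γ + lam • 1)⁻¹ *ᵥ y)))
      ≤ (Γ *ᵥ α - y) ⬝ᵥ (Γ *ᵥ α - y) + lam * (α ⬝ᵥ (Γ *ᵥ α)) := by
  intro α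
  have hI : ((lam • 1 : Matrix (Fin n) (Fin n) ℝ)).PosDef := by
    exact Matrix.PosDef.one.smul hlam
  have hA : (Γ + lam • 1 : Matrix (Fin n) (Fin n) ℝ).PosDef := Matrix.PosDef.posSemidef_add hΓ hI
  set s : Fin n → ℝ := (Γ + lam • 1)⁻¹ *ᵥ y with hs
  have hAs : (Γ + lam • 1) *ᵥ s = y := by
    rw [hs, Matrix.mulVec_mulVec, Matrix.mul_nonsing_inv _ (isUnit_iff_isUnit_det _ |>.mp hA.isUnit), Matrix.one_mulVec]
  have hGs : Γ *ᵥ s = y - lam • s := by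
    have : Γ *ᵥ s + lam • s = y := by
      have := hAs
      rwa [Matrix.add_mulVec, Matrix.smul_mulVec, Matrix.one_mulVec] at this
    linear_combination (norm := module) this
  set β : Fin n → ℝ := α - s with hβ
  have hα : α = β + s := by rw [hβ]; abel
  -- symmetry of Γ
  have hsym : ∀ u v : Fin n → ℝ, u ⬝ᵥ (Γ *ᵥ v) = v ⬝ᵥ (Γ *ᵥ u) := by
    intro u v
    rw [Matrix.dotProduct_mulVec, ← Matrix.mulVec_transpose]
    have : Γᵀ = Γ := hΓ.1
    rw [this, dotProduct_comm]
  have key : (Γ *ᵥ α - y) ⬝ᵥ (Γ *ᵥ α - y) + lam * (α ⬝ᵥ (Γ *ᵥ α))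
      = ((Γ *ᵥ s - y) ⬝ᵥ (Γ *ᵥ s - y) + lam * (s ⬝ᵥ (Γ *ᵥ s)))
        + ((Γ *ᵥ β) ⬝ᵥ (Γ *ᵥ β) + lam * (β ⬝ᵥ (Γ *ᵥ β))) := by
    rw [hα, Matrix.mulVec_add, hGs]
    have e1 : Γ *ᵥ β + (y - lam • s) - y = Γ *ᵥ β - lam • s := by
      module
    rw [e1]
    simp only [dotProduct_sub, sub_dotProduct, dotProduct_add,
      add_dotProduct, dotProduct_smul, smul_dotProduct, smul_eq_mul]
    have h1 : s ⬝ᵥ (Γ *ᵥ β) = β ⬝ᵥ (Γ *ᵥ s) := hsym s β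
    have h2 : β ⬝ᵥ (Γ *ᵥ s) = β ⬝ᵥ y - lam * (β ⬝ᵥ s) := by
      rw [hGs]
      simp [dotProduct_sub, dotProduct_smul]
    have h3 : (Γ *ᵥ β) ⬝ᵥ s = s ⬝ᵥ (Γ *ᵥ β) := dotProduct_comm _ _
    have h4 : (Γ *ᵥ β) ⬝ᵥ y = y ⬝ᵥ (Γ *ᵥ β) := dotProduct_comm _ _
    have h5 : y ⬝ᵥ (Γ *ᵥ β) = β ⬝ᵥ (Γ *ᵥ y) := hsym y β
    have h7 : s ⬝ᵥ β = β ⬝ᵥ s := dotProduct_comm _ _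
    have h8 : y ⬝ᵥ β = β ⬝ᵥ y := dotProduct_comm _ _
    have h9 : (Γ *ᵥ β) ⬝ᵥ s = β ⬝ᵥ y - lam * (β ⬝ᵥ s) := by
      rw [h3, h1, h2]
    nlinarith [h1, h2, h3, h4, h5, h7, h8, h9]
  rw [key]
  have hq1 : 0 ≤ (Γ *ᵥ β) ⬝ᵥ (Γ *ᵥ β) := by
    rw [dotProduct]
    exact Finset.sum_nonneg fun i _ => mul_self_nonneg _
  have hq2 : 0 ≤ β ⬝ᵥ (Γ *ᵥ β) := by
    have := hΓ.dotProduct_mulVec_nonneg β; simpa using this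
  nlinarith [hq1, hq2]
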